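/- Fix α ∈ ℂ with α ≠ 0 and let B be ℂ³ with basis x, y, z and bilinear multiplication whose only nonzero products of basis elements are z·x = αx, z·y = y, and y·z = −y (this makes B a Leibniz algebra). Then B is not cyclic: there is no b ∈ B with {b, b², b³} linearly independent. -/

import Mathlib

/-- `lpow μ x k` is the left-normed power `x^(k+1)`; so `lpow μ x 0 = x`,
`lpow μ x 1 = x·x = x²`, `lpow μ x 2 = x·x² = x³`, etc. -/
def lpow {A : Type*} [AddCommGroup A] [Module ℂ A]
    (μ : A →ₗ[ℂ] A →ₗ[ℂ] A) (x : A) : ℕ → A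
  | 0 => x
  | n + 1 => μ x (lpow μ x n)
/-- The algebra B = ℂ³ with basis x = e₀, y = e₁, z = e₂ whose only nonzero products
of basis elements are z·x = αx, z·y = y, y·z = −y; thus
u·v = u₁ • L_y(v) + u₂ • L_z(v) with L_y(z) = −y, L_z(x) = αx, L_z(y) = y. -/
noncomputable def mulB (α : ℂ) : (Fin 3 → ℂ) →ₗ[ℂ] (Fin 3 → ℂ) →ₗ[ℂ] (Fin 3 → ℂ) :=
  (LinearMap.proj 1).smulRight (Matrix.mulVecLin !![0,0,0;0,0,-1;0,0,0]) +
  (LinearMap.proj 2).smulRight (Matrix.mulVecLin !![α,0,0;0,1,0;0,0,0])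

lemma key_lemma (α : ℂ) (b : Fin 3 → ℂ) :
    lpow (mulB α) b 2 = (α * b 2) • lpow (mulB α) b 1 := by
  show mulB α b (mulB α b b) = (α * b 2) • mulB α b b
  funext i
  fin_cases i
  · simp [mulB, Matrix.mulVecLin, Matrix.mulVec, dotProduct, Fin.sum_univ_three]
    ring
  · simp [mulB, Matrix.mulVecLin, Matrix.mulVec, dotProduct, Fin.sum_univ_three]
    right
    ring
  · simp [mulB, Matrix.mulVecLin, Matrix.mulVec, dotProduct, Fin.sum_univ_three]

/-- For α ≠ 0, the algebra B is not cyclic: no b ∈ B has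
{b, b², b³} linearly independent. -/
theorem algebraB_not_cyclic (α : ℂ) (hα : α ≠ 0) :
    ¬ ∃ b : Fin 3 → ℂ,
        LinearIndependent ℂ ![b, lpow (mulB α) b 1, lpow (mulB α) b 2] := by
  rintro ⟨b, h⟩
  have key := Fintype.linearIndependent_iff.mp h ![0, α * b 2, -1] ?_ 2
  · norm_num [Matrix.cons_val_two] at key
  · simp [Fin.sum_univ_three, key_lemma α b]
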